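/- With the setup of Proposition 1 (finite S, probabilities π, consequences 𝒞, α ∈ (0,1], c° = min 𝒞, c* = max 𝒞, M = c* - c°, ε = half the minimum positive gap between distinct consequence values), there exist binary variables λ(s), λ̄(s) ∈ {0,1} and reals ρ(s), ρ̄(s) ∈ [0,1] such that with η = VaR_α all constraints (η - 𝒞(s) ≤ Mλ(s); η - 𝒞(s) ≥ (M+ε)λ(s) - M; η - 𝒞(s) ≤ (M+ε)λ̄(s) - ε; η - 𝒞(s) ≥ M(λ̄(s)-1); ρ̄(s) ≤ λ̄(s); π(s) - (1-λ(s)) ≤ ρ(s) ≤ λ(s); ρ(s) ≤ ρ̄(s) ≤ π(s); ∑_s ρ̄(s) = α) are satisfied; i.e., η = VaR_α is feasible for the CVaR MILP. -/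

import Mathlib

open scoped Classical

/-- Proposition 1, feasibility part: with `c° = min 𝒞`, `c* = max 𝒞`,
`M = c* - c°`, `ε` half the minimum positive gap between distinct consequence
values, and `η = VaR_α` (so `P(𝒞<η) < α ≤ P(𝒞≤η)` and `η` is a consequence
value), there exist binary `λ(s), λ̄(s)` and reals `ρ(s), ρ̄(s) ∈ [0,1]`
satisfying all the CVaR MILP constraints. -/
theorem cvar_milp_feasibility
    {S : Type*} [Fintype S] [Nonempty S] (π : S → ℝ) (𝒞 : S → ℝ)
    (α : ℝ) (hα0 : 0 < α) (hα1 : α ≤ 1)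
    (hπ0 : ∀ s, 0 ≤ π s) (hπ1 : ∀ s, π s ≤ 1) (hsum : ∑ s, π s = 1)
    (M ε : ℝ)
    (hM : M = (Finset.univ.image 𝒞).max' (by simp) - (Finset.univ.image 𝒞).min' (by simp))
    (hε0 : 0 < ε)
    (hε : ∀ s s' : S, 𝒞 s ≠ 𝒞 s' → 2 * ε ≤ |𝒞 s - 𝒞 s'|)
    (η : ℝ) (hηval : ∃ s : S, 𝒞 s = η)
    (hlow : (∑ s ∈ Finset.univ.filter (fun s => 𝒞 s < η), π s) < α)
    (hhigh : α ≤ ∑ s ∈ Finset.univ.filter (fun s => 𝒞 s ≤ η), π s) :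
    ∃ lam lamBar ρ ρbar : S → ℝ,
      (∀ s, lam s = 0 ∨ lam s = 1) ∧
      (∀ s, lamBar s = 0 ∨ lamBar s = 1) ∧
      (∀ s, 0 ≤ ρ s ∧ ρ s ≤ 1) ∧
      (∀ s, 0 ≤ ρbar s ∧ ρbar s ≤ 1) ∧
      (∀ s, η - 𝒞 s ≤ M * lam s) ∧
      (∀ s, (M + ε) * lam s - M ≤ η - 𝒞 s) ∧
      (∀ s, η - 𝒞 s ≤ (M + ε) * lamBar s - ε) ∧
      (∀ s, M * (lamBar s - 1) ≤ η - 𝒞 s) ∧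
      (∀ s, ρbar s ≤ lamBar s) ∧
      (∀ s, π s - (1 - lam s) ≤ ρ s) ∧
      (∀ s, ρ s ≤ lam s) ∧
      (∀ s, ρ s ≤ ρbar s) ∧
      (∀ s, ρbar s ≤ π s) ∧
      (∑ s, ρbar s) = α := by
  classical
  obtain ⟨s₀, hs₀⟩ := hηval
  set cmax := (Finset.univ.image 𝒞).max' (by simp) with hcmax
  set cmin := (Finset.univ.image 𝒞).min' (by simp) with hcmin
  have hmem : ∀ s : S, 𝒞 s ∈ Finset.univ.image 𝒞 := fun s =>
    Finset.mem_image_of_mem _ (Finset.mem_univ s)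
  have hle_max : ∀ s : S, 𝒞 s ≤ cmax := fun s => Finset.le_max' _ _ (hmem s)
  have hmin_le : ∀ s : S, cmin ≤ 𝒞 s := fun s => Finset.min'_le _ _ (hmem s)
  have hηmax : η ≤ cmax := hs₀ ▸ hle_max s₀
  have hηmin : cmin ≤ η := hs₀ ▸ hmin_le s₀
  set PA := ∑ s ∈ Finset.univ.filter (fun s => 𝒞 s < η), π s with hPA
  set PE := ∑ s ∈ Finset.univ.filter (fun s => 𝒞 s = η), π s with hPE
  have hsplit : (∑ s ∈ Finset.univ.filter (fun s => 𝒞 s ≤ η), π s) = PA + PE := by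
    rw [hPA, hPE, ← Finset.sum_union]
    · apply Finset.sum_congr _ (fun _ _ => rfl)
      ext s
      simp only [Finset.mem_union, Finset.mem_filter, Finset.mem_univ, true_and]
      constructor
      · intro h; rcases lt_or_eq_of_le h with h | h
        · exact Or.inl h
        · exact Or.inr h
      · rintro (h | h)
        · exact le_of_lt h
        · exact le_of_eq h
    · rw [Finset.disjoint_left]
      intro s hs hs'
      simp only [Finset.mem_filter, Finset.mem_univ, true_and] at hs hs'
      exact absurd hs' (ne_of_lt hs)
  have hαE : α - PA ≤ PE := by rw [hsplit] at hhigh; linarith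
  have hPEpos : 0 < PE := lt_of_lt_of_le (by linarith) hαE
  set t := (α - PA) / PE with ht
  have ht0 : 0 ≤ t := div_nonneg (by linarith) hPEpos.le
  have ht1 : t ≤ 1 := (div_le_one hPEpos).mpr hαE
  have hts : ∀ s : S, 0 ≤ t * π s ∧ t * π s ≤ π s := by
    intro s
    refine ⟨mul_nonneg ht0 (hπ0 s), ?_⟩
    calc t * π s ≤ 1 * π s := mul_le_mul_of_nonneg_right ht1 (hπ0 s)
      _ = π s := one_mul _
  have hgaplt : ∀ s : S, 𝒞 s < η → 2 * ε ≤ η - 𝒞 s := by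
    intro s h
    have hne : 𝒞 s ≠ 𝒞 s₀ := by rw [hs₀]; exact ne_of_lt h
    have := hε s s₀ hne
    rw [hs₀, abs_of_nonpos (by linarith)] at this
    linarith
  have hgapgt : ∀ s : S, η < 𝒞 s → 2 * ε ≤ 𝒞 s - η := by
    intro s h
    have hne : 𝒞 s ≠ 𝒞 s₀ := by rw [hs₀]; exact ne_of_gt h
    have := hε s s₀ hne
    rw [hs₀, abs_of_nonneg (by linarith)] at this
    linarith
  refine ⟨fun s => if 𝒞 s < η then 1 else 0,
    fun s => if 𝒞 s ≤ η then 1 else 0,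
    fun s => if 𝒞 s < η then π s else 0,
    fun s => if 𝒞 s < η then π s else if 𝒞 s = η then t * π s else 0,
    ?_, ?_, ?_, ?_, ?_, ?_, ?_, ?_, ?_, ?_, ?_, ?_, ?_, ?_⟩
  case refine_14 =>
    have key : ∀ s : S, (if 𝒞 s < η then π s else if 𝒞 s = η then t * π s else 0)
        = (if 𝒞 s < η then π s else 0) + (if 𝒞 s = η then t * π s else 0) := by
      intro s
      by_cases h : 𝒞 s < η
      · rw [if_pos h, if_pos h, if_neg (ne_of_lt h)]; ring
      · rw [if_neg h, if_neg h, zero_add]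
    calc (∑ s, if 𝒞 s < η then π s else if 𝒞 s = η then t * π s else 0)
        = ∑ s, ((if 𝒞 s < η then π s else 0) + (if 𝒞 s = η then t * π s else 0)) :=
          Finset.sum_congr rfl (fun s _ => key s)
      _ = (∑ s, if 𝒞 s < η then π s else 0) + ∑ s, (if 𝒞 s = η then t * π s else 0) :=
          Finset.sum_add_distrib
      _ = PA + t * PE := by
          rw [← Finset.sum_filter, ← Finset.sum_filter, ← Finset.mul_sum, ← hPA, ← hPE]
      _ = α := by rw [ht]; field_simp; ring
  -- lam binary
  · intro s; by_cases h : 𝒞 s < η <;> simp [h]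
  -- lamBar binary
  · intro s; by_cases h : 𝒞 s ≤ η <;> simp [h]
  -- ρ ∈ [0,1]
  · intro s
    by_cases h : 𝒞 s < η
    · simp only [if_pos h]; exact ⟨hπ0 s, hπ1 s⟩
    · simp only [if_neg h]; norm_num
  -- ρbar ∈ [0,1]
  · intro s
    by_cases h : 𝒞 s < η
    · simp only [if_pos h]; exact ⟨hπ0 s, hπ1 s⟩
    · by_cases h' : 𝒞 s = η
      · simp only [if_neg h, if_pos h']
        exact ⟨(hts s).1, le_trans (hts s).2 (hπ1 s)⟩
      · simp only [if_neg h, if_neg h']; norm_num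
  -- η - 𝒞 s ≤ M * lam s
  · intro s
    by_cases h : 𝒞 s < η
    · simp only [if_pos h, mul_one]; linarith [hmin_le s]
    · simp only [if_neg h, mul_zero]; push_neg at h; linarith
  -- (M+ε) * lam - M ≤ η - 𝒞 s
  · intro s
    by_cases h : 𝒞 s < η
    · simp only [if_pos h, mul_one]; linarith [hgaplt s h, hε0]
    · simp only [if_neg h, mul_zero]; push_neg at h; linarith [hle_max s]
  -- η - 𝒞 s ≤ (M+ε) * lamBar - ε
  · intro s
    by_cases h : 𝒞 s ≤ η
    · simp only [if_pos h, mul_one]; linarith [hmin_le s]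
    · simp only [if_neg h, mul_zero]; push_neg at h; linarith [hgapgt s h, hε0]
  -- M * (lamBar - 1) ≤ η - 𝒞 s
  · intro s
    by_cases h : 𝒞 s ≤ η
    · simp only [if_pos h]; linarith
    · simp only [if_neg h]; push_neg at h; linarith [hle_max s]
  -- ρbar ≤ lamBar
  · intro s
    by_cases h : 𝒞 s < η
    · simp only [if_pos h, if_pos (le_of_lt h)]; exact hπ1 s
    · by_cases h' : 𝒞 s = η
      · simp only [if_neg h, if_pos h', if_pos (le_of_eq h')]
        exact le_trans (hts s).2 (hπ1 s)
      · have h3 : ¬ 𝒞 s ≤ η := by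
          intro hle
          rcases lt_or_eq_of_le hle with hx | hx
          · exact h hx
          · exact h' hx
        simp only [if_neg h, if_neg h', if_neg h3]; exact le_refl 0
  -- π s - (1 - lam s) ≤ ρ s
  · intro s
    by_cases h : 𝒞 s < η
    · simp only [if_pos h]; linarith
    · simp only [if_neg h]; linarith [hπ1 s]
  -- ρ ≤ lam
  · intro s
    by_cases h : 𝒞 s < η
    · simp only [if_pos h]; exact hπ1 s
    · simp only [if_neg h]; exact le_refl 0
  -- ρ ≤ ρbar
  · intro s
    by_cases h : 𝒞 s < η
    · simp only [if_pos h]; exact le_refl _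
    · by_cases h' : 𝒞 s = η
      · simp only [if_neg h, if_pos h']; exact (hts s).1
      · simp only [if_neg h, if_neg h']; exact le_refl 0
  -- ρbar ≤ π
  · intro s
    by_cases h : 𝒞 s < η
    · simp only [if_pos h]; exact le_refl _
    · by_cases h' : 𝒞 s = η
      · simp only [if_neg h, if_pos h']; exact (hts s).2
      · simp only [if_neg h, if_neg h']; exact hπ0 s
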